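/- (Main theorem: compositionality.) Let x₊, y₊ ∈ evenOdd Q 0 and x₋, y₋ ∈ evenOdd Q 1, and set p₊ = x₊y₊ − (reverse y₋)x₋ and p₋ = y₋x₊ + x₋(reverse y₊), so that p₊ + p₋ = (x₊+x₋) • (y₊+y₋) with p₊ even and p₋ odd. Then N(x • y) = N(x)N(y); concretely, p₊ * reverse(p₊) + reverse(p₋) * p₋ = (x₊ * reverse(x₊) + reverse(x₋) * x₋) * (y₊ * reverse(y₊) + reverse(y₋) * y₋). -/

import Mathlib

open CliffordAlgebra

/-- The diagonal quadratic form on `ℝ³` with weights `l`. -/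
noncomputable def Qf (l : Fin 3 → ℝ) : QuadraticForm ℝ (Fin 3 → ℝ) :=
  QuadraticMap.weightedSumSquares ℝ l

/-- The octonionic product `x • y` of `x = x₊ + x₋` and `y = y₊ + y₋`, expressed in terms of
the even/odd parts: `x • y = x₊y₊ - (reverse y₋)x₋ + y₋x₊ + x₋(reverse y₊)`. -/
noncomputable def octMul {R M : Type*} [CommRing R] [AddCommGroup M] [Module R M]
    (Q : QuadraticForm R M) (xp xm yp ym : CliffordAlgebra Q) : CliffordAlgebra Q :=
  xp * yp - reverse ym * xm + ym * xp + xm * reverse yp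

/-- The octonionic norm `N(x) = x • x*`, where `x* = reverse x₊ - x₋` is the full grade
inversion of `x = x₊ + x₋`. -/
noncomputable def octNorm {R M : Type*} [CommRing R] [AddCommGroup M] [Module R M]
    (Q : QuadraticForm R M) (xp xm : CliffordAlgebra Q) : CliffordAlgebra Q :=
  octMul Q xp xm (reverse xp) (-xm)

noncomputable def Ee (l : Fin 3 → ℝ) (i : Fin 3) : CliffordAlgebra (Qf l) :=
  ι (Qf l) (Pi.single i 1)

lemma Qf_single (l : Fin 3 → ℝ) (i : Fin 3) : Qf l (Pi.single i 1) = l i := by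
  simp [Qf, QuadraticMap.weightedSumSquares_apply, Pi.single_apply]

lemma Qf_ortho (l : Fin 3 → ℝ) {i j : Fin 3} (h : i ≠ j) :
    (Qf l).IsOrtho (Pi.single i 1) (Pi.single j 1) := by
  rw [QuadraticMap.isOrtho_def]
  fin_cases i <;> fin_cases j <;> simp_all [Qf, QuadraticMap.weightedSumSquares_apply,
    Fin.sum_univ_three, Pi.single_apply] <;> ring

lemma Ee_sq (l : Fin 3 → ℝ) (i : Fin 3) : Ee l i * Ee l i = l i • 1 := by
  rw [Ee, ι_sq_scalar, Qf_single, Algebra.algebraMap_eq_smul_one]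

lemma Ee_sq' (l : Fin 3 → ℝ) (i : Fin 3) (x : CliffordAlgebra (Qf l)) :
    Ee l i * (Ee l i * x) = l i • x := by
  rw [← mul_assoc, Ee_sq, smul_mul_assoc, one_mul]

lemma Ee_swap (l : Fin 3 → ℝ) {i j : Fin 3} (h : i ≠ j) :
    Ee l i * Ee l j = -(Ee l j * Ee l i) :=
  ι_mul_ι_comm_of_isOrtho (Qf_ortho l h)

lemma Ee_swap' (l : Fin 3 → ℝ) {i j : Fin 3} (h : i ≠ j) (x : CliffordAlgebra (Qf l)) :
    Ee l i * (Ee l j * x) = -(Ee l j * (Ee l i * x)) := by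
  rw [← mul_assoc, Ee_swap l h, ← mul_assoc, neg_mul]

section
variable (l : Fin 3 → ℝ)

lemma E10 (x) : Ee l 1 * (Ee l 0 * x) = -(Ee l 0 * (Ee l 1 * x)) := Ee_swap' l (by decide) x
lemma E20 (x) : Ee l 2 * (Ee l 0 * x) = -(Ee l 0 * (Ee l 2 * x)) := Ee_swap' l (by decide) x
lemma E21 (x) : Ee l 2 * (Ee l 1 * x) = -(Ee l 1 * (Ee l 2 * x)) := Ee_swap' l (by decide) x
lemma E10' : Ee l 1 * Ee l 0 = -(Ee l 0 * Ee l 1) := Ee_swap l (by decide)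
lemma E20' : Ee l 2 * Ee l 0 = -(Ee l 0 * Ee l 2) := Ee_swap l (by decide)
lemma E21' : Ee l 2 * Ee l 1 = -(Ee l 1 * Ee l 2) := Ee_swap l (by decide)
lemma E00 (x) : Ee l 0 * (Ee l 0 * x) = l 0 • x := Ee_sq' l 0 x
lemma E11 (x) : Ee l 1 * (Ee l 1 * x) = l 1 • x := Ee_sq' l 1 x
lemma E22 (x) : Ee l 2 * (Ee l 2 * x) = l 2 • x := Ee_sq' l 2 x

lemma iota_decomp (m : Fin 3 → ℝ) :
    ι (Qf l) m = m 0 • Ee l 0 + m 1 • Ee l 1 + m 2 • Ee l 2 := by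
  have : m = m 0 • (Pi.single 0 1 : Fin 3 → ℝ) + m 1 • (Pi.single 1 1 : Fin 3 → ℝ)
      + m 2 • (Pi.single 2 1 : Fin 3 → ℝ) := by
    funext k; fin_cases k <;> simp [Pi.single_apply]
  rw [this]
  simp [Ee]

noncomputable def evB : Fin 4 → CliffordAlgebra (Qf l) :=
  ![1, Ee l 0 * Ee l 1, Ee l 0 * Ee l 2, Ee l 1 * Ee l 2]

noncomputable def odB : Fin 4 → CliffordAlgebra (Qf l) :=
  ![Ee l 0, Ee l 1, Ee l 2, Ee l 0 * (Ee l 1 * Ee l 2)]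

end

example (l : Fin 3 → ℝ) : True := trivial

section
variable (l : Fin 3 → ℝ)

noncomputable def SpEv : Submodule ℝ (CliffordAlgebra (Qf l)) :=
  Submodule.span ℝ (Set.range (evB l))
noncomputable def SpOd : Submodule ℝ (CliffordAlgebra (Qf l)) :=
  Submodule.span ℝ (Set.range (odB l))

lemma g0_ev : (1 : CliffordAlgebra (Qf l)) ∈ SpEv l :=
  Submodule.subset_span (Set.mem_range.mpr ⟨0, by simp [evB]⟩)
lemma g1_ev : Ee l 0 * Ee l 1 ∈ SpEv l :=
  Submodule.subset_span (Set.mem_range.mpr ⟨1, by simp [evB]⟩)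
lemma g2_ev : Ee l 0 * Ee l 2 ∈ SpEv l :=
  Submodule.subset_span (Set.mem_range.mpr ⟨2, by simp [evB]⟩)
lemma g3_ev : Ee l 1 * Ee l 2 ∈ SpEv l :=
  Submodule.subset_span (Set.mem_range.mpr ⟨3, by simp [evB]⟩)

lemma EE_mem_ev (i j : Fin 3) (x : CliffordAlgebra (Qf l)) (hx : x ∈ SpEv l) :
    Ee l i * (Ee l j * x) ∈ SpEv l := by
  induction hx using Submodule.span_induction with
  | mem g hg =>
    obtain ⟨k, rfl⟩ := hg
    fin_cases i <;> fin_cases j <;> fin_cases k <;>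
      simp [evB, Ee_sq, E10, E20, E21, E10', E20', E21', E00, E11, E22,
        mul_smul_comm, smul_smul, ← neg_smul] <;>
      first
        | exact g0_ev l
        | exact g1_ev l
        | exact g2_ev l
        | exact g3_ev l
        | exact Submodule.smul_mem _ _ (g0_ev l)
        | exact Submodule.smul_mem _ _ (g1_ev l)
        | exact Submodule.smul_mem _ _ (g2_ev l)
        | exact Submodule.smul_mem _ _ (g3_ev l)
        | exact Submodule.neg_mem _ (g1_ev l)
        | exact Submodule.neg_mem _ (g2_ev l)
        | exact Submodule.neg_mem _ (g3_ev l)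
        | exact Submodule.neg_mem _ (Submodule.smul_mem _ _ (g1_ev l))
        | exact Submodule.neg_mem _ (Submodule.smul_mem _ _ (g2_ev l))
        | exact Submodule.neg_mem _ (Submodule.smul_mem _ _ (g3_ev l))
  | zero => simp only [mul_zero]; exact Submodule.zero_mem _
  | add a b _ _ iha ihb =>
    simp only [mul_add]; exact Submodule.add_mem _ iha ihb
  | smul c a _ iha =>
    simp only [mul_smul_comm]; exact Submodule.smul_mem _ _ iha

end

section
variable (l : Fin 3 → ℝ)

lemma g0_od : Ee l 0 ∈ SpOd l :=
  Submodule.subset_span (Set.mem_range.mpr ⟨0, by simp [odB]⟩)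
lemma g1_od : Ee l 1 ∈ SpOd l :=
  Submodule.subset_span (Set.mem_range.mpr ⟨1, by simp [odB]⟩)
lemma g2_od : Ee l 2 ∈ SpOd l :=
  Submodule.subset_span (Set.mem_range.mpr ⟨2, by simp [odB]⟩)
lemma g3_od : Ee l 0 * (Ee l 1 * Ee l 2) ∈ SpOd l :=
  Submodule.subset_span (Set.mem_range.mpr ⟨3, by simp [odB]⟩)

lemma EE_mem_od (i j : Fin 3) (x : CliffordAlgebra (Qf l)) (hx : x ∈ SpOd l) :
    Ee l i * (Ee l j * x) ∈ SpOd l := by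
  induction hx using Submodule.span_induction with
  | mem g hg =>
    obtain ⟨k, rfl⟩ := hg
    fin_cases i <;> fin_cases j <;> fin_cases k <;>
      simp [odB, Ee_sq, E10, E20, E21, E10', E20', E21', E00, E11, E22,
        mul_smul_comm, smul_smul, ← neg_smul] <;>
      first
        | exact g0_od l
        | exact g1_od l
        | exact g2_od l
        | exact g3_od l
        | exact Submodule.smul_mem _ _ (g0_od l)
        | exact Submodule.smul_mem _ _ (g1_od l)
        | exact Submodule.smul_mem _ _ (g2_od l)
        | exact Submodule.smul_mem _ _ (g3_od l)
  | zero => simp only [mul_zero]; exact Submodule.zero_mem _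
  | add a b _ _ iha ihb =>
    simp only [mul_add]; exact Submodule.add_mem _ iha ihb
  | smul c a _ iha =>
    simp only [mul_smul_comm]; exact Submodule.smul_mem _ _ iha

lemma iotaiota_mem_ev (m₁ m₂ : Fin 3 → ℝ) (x : CliffordAlgebra (Qf l)) (hx : x ∈ SpEv l) :
    ι (Qf l) m₁ * ι (Qf l) m₂ * x ∈ SpEv l := by
  rw [mul_assoc, iota_decomp l m₁, iota_decomp l m₂]
  simp only [add_mul, smul_mul_assoc, mul_add, mul_smul_comm, smul_smul]
  repeat'
    first
      | apply Submodule.add_mem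
      | apply Submodule.smul_mem
      | exact EE_mem_ev l _ _ _ hx

lemma iotaiota_mem_od (m₁ m₂ : Fin 3 → ℝ) (x : CliffordAlgebra (Qf l)) (hx : x ∈ SpOd l) :
    ι (Qf l) m₁ * ι (Qf l) m₂ * x ∈ SpOd l := by
  rw [mul_assoc, iota_decomp l m₁, iota_decomp l m₂]
  simp only [add_mul, smul_mul_assoc, mul_add, mul_smul_comm, smul_smul]
  repeat'
    first
      | apply Submodule.add_mem
      | apply Submodule.smul_mem
      | exact EE_mem_od l _ _ _ hx

lemma even_sub (x : CliffordAlgebra (Qf l)) (hx : x ∈ evenOdd (Qf l) 0) : x ∈ SpEv l := by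
  induction x, hx using even_induction with
  | algebraMap r =>
    rw [Algebra.algebraMap_eq_smul_one]
    exact Submodule.smul_mem _ _ (g0_ev l)
  | add x y hx hy ihx ihy => exact Submodule.add_mem _ ihx ihy
  | ι_mul_ι_mul m₁ m₂ x hx ih => exact iotaiota_mem_ev l m₁ m₂ x ih

lemma odd_sub (x : CliffordAlgebra (Qf l)) (hx : x ∈ evenOdd (Qf l) 1) : x ∈ SpOd l := by
  induction x, hx using odd_induction with
  | ι v =>
    rw [iota_decomp l v]
    exact Submodule.add_mem _ (Submodule.add_mem _ (Submodule.smul_mem _ _ (g0_od l))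
      (Submodule.smul_mem _ _ (g1_od l))) (Submodule.smul_mem _ _ (g2_od l))
  | add x y hx hy ihx ihy => exact Submodule.add_mem _ ihx ihy
  | ι_mul_ι_mul m₁ m₂ x hx ih => exact iotaiota_mem_od l m₁ m₂ x ih

lemma even_decomp (x : CliffordAlgebra (Qf l)) (hx : x ∈ evenOdd (Qf l) 0) :
    ∃ a b c d : ℝ, x = a • 1 + b • (Ee l 0 * Ee l 1) + c • (Ee l 0 * Ee l 2)
      + d • (Ee l 1 * Ee l 2) := by
  have h := even_sub l x hx
  rw [SpEv, Submodule.mem_span_range_iff_exists_fun] at h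
  obtain ⟨c, hc⟩ := h
  exact ⟨c 0, c 1, c 2, c 3, by rw [← hc, Fin.sum_univ_four]; simp [evB]⟩

lemma odd_decomp (x : CliffordAlgebra (Qf l)) (hx : x ∈ evenOdd (Qf l) 1) :
    ∃ a b c d : ℝ, x = a • Ee l 0 + b • Ee l 1 + c • Ee l 2
      + d • (Ee l 0 * (Ee l 1 * Ee l 2)) := by
  have h := odd_sub l x hx
  rw [SpOd, Submodule.mem_span_range_iff_exists_fun] at h
  obtain ⟨c, hc⟩ := h
  exact ⟨c 0, c 1, c 2, c 3, by rw [← hc, Fin.sum_univ_four]; simp [odB]⟩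

end

section
variable (l : Fin 3 → ℝ)

lemma reverse_Ee (i : Fin 3) : reverse (Ee l i) = Ee l i := reverse_ι _

lemma even_norm (x : CliffordAlgebra (Qf l)) (hx : x ∈ evenOdd (Qf l) 0) :
    ∃ s : ℝ, x * reverse x = s • 1 ∧ reverse x * x = s • 1 := by
  obtain ⟨a, b, c, d, rfl⟩ := even_decomp l x hx
  refine ⟨a * a + l 0 * l 1 * (b * b) + l 0 * l 2 * (c * c) + l 1 * l 2 * (d * d), ?_, ?_⟩ <;>
  · simp only [map_add, map_smul, reverse.map_mul, reverse.map_one, reverse_Ee]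
    simp [mul_add, add_mul, smul_mul_assoc, mul_smul_comm, smul_smul, mul_assoc,
      Ee_sq, E10, E20, E21, E10', E20', E21', E00, E11, E22]
    module

lemma odd_norm (x : CliffordAlgebra (Qf l)) (hx : x ∈ evenOdd (Qf l) 1) :
    ∃ s : ℝ, x * reverse x = s • 1 ∧ reverse x * x = s • 1 := by
  obtain ⟨a, b, c, d, rfl⟩ := odd_decomp l x hx
  refine ⟨l 0 * (a * a) + l 1 * (b * b) + l 2 * (c * c) + l 0 * (l 1 * l 2) * (d * d), ?_, ?_⟩ <;>
  · simp only [map_add, map_smul, reverse.map_mul, reverse.map_one, reverse_Ee]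
    simp [mul_add, add_mul, smul_mul_assoc, mul_smul_comm, smul_smul, mul_assoc,
      Ee_sq, E10, E20, E21, E10', E20', E21', E00, E11, E22]
    module

lemma trace_id (x y : CliffordAlgebra (Qf l)) (hx : x ∈ evenOdd (Qf l) 0)
    (hy : y ∈ evenOdd (Qf l) 0) :
    x * y + reverse (x * y) = y * x + reverse (y * x) := by
  obtain ⟨a, b, c, d, rfl⟩ := even_decomp l x hx
  obtain ⟨a', b', c', d', rfl⟩ := even_decomp l y hy
  simp only [map_add, map_smul, reverse.map_mul, reverse.map_one, reverse_Ee]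
  simp [mul_add, add_mul, smul_mul_assoc, mul_smul_comm, smul_smul, mul_assoc,
    Ee_sq, E10, E20, E21, E10', E20', E21', E00, E11, E22]
  module

end

lemma assemble {S : Type*} [Ring S] [Algebra ℝ S] (A A' B B' C C' D D' : S)
    (sA sB sC sD : ℝ)
    (hA1 : A * A' = sA • 1) (hA2 : A' * A = sA • 1)
    (hB1 : B * B' = sB • 1) (hB2 : B' * B = sB • 1)
    (hC : C * C' = sC • 1) (hD : D' * D = sD • 1)
    (hcross : A * (C * B' * D) + D' * (B * C') * A'
      = C * B' * D * A + A' * (D' * (B * C'))) :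
    (A * C - D' * B) * (C' * A' - B' * D) + (A' * D' + C * B') * (D * A + B * C')
      = (A * A' + B' * B) * (C * C' + D' * D) := by
  have h1 : A * C * (C' * A') = (sA * sC) • (1 : S) := by
    have : A * C * (C' * A') = A * (C * C') * A' := by noncomm_ring
    rw [this, hC, mul_smul_comm, mul_one, smul_mul_assoc, hA1, smul_smul, mul_comm]
  have h2 : D' * B * (B' * D) = (sB * sD) • (1 : S) := by
    have : D' * B * (B' * D) = D' * (B * B') * D := by noncomm_ring
    rw [this, hB1, mul_smul_comm, mul_one, smul_mul_assoc, hD, smul_smul]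
  have h3 : A' * D' * (D * A) = (sA * sD) • (1 : S) := by
    have : A' * D' * (D * A) = A' * (D' * D) * A := by noncomm_ring
    rw [this, hD, mul_smul_comm, mul_one, smul_mul_assoc, hA2, smul_smul, mul_comm]
  have h4 : C * B' * (B * C') = (sB * sC) • (1 : S) := by
    have : C * B' * (B * C') = C * (B' * B) * C' := by noncomm_ring
    rw [this, hB2, mul_smul_comm, mul_one, smul_mul_assoc, hC, smul_smul]
  have expand : (A * C - D' * B) * (C' * A' - B' * D) + (A' * D' + C * B') * (D * A + B * C')
      = (A * C * (C' * A') + D' * B * (B' * D) + A' * D' * (D * A) + C * B' * (B * C'))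
        + ((C * B' * D * A + A' * (D' * (B * C'))) - (A * (C * B' * D) + D' * (B * C') * A')) := by
    noncomm_ring
  rw [expand, ← hcross, sub_self, add_zero, h1, h2, h3, h4, hA1, hB2, hC, hD]
  simp only [smul_mul_assoc, mul_smul_comm, add_mul, mul_add, one_mul, mul_one, smul_smul,
    ← add_smul]
  ring_nf


lemma octNorm_eq {R M : Type*} [CommRing R] [AddCommGroup M] [Module R M]
    (Q : QuadraticForm R M) (a b : CliffordAlgebra Q) :
    octNorm Q a b = a * reverse a + reverse b * b := by
  simp only [octNorm, octMul, map_neg, reverse_reverse, neg_mul, mul_neg, sub_neg_eq_add]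
  abel

/-- (Main theorem: compositionality of the octonionic norm.) With
`p₊ = x₊y₊ - (reverse y₋)x₋` and `p₋ = y₋x₊ + x₋(reverse y₊)` the even and odd parts of
`x • y`, one has `N(x • y) = N(x)N(y)`; concretely,
`p₊ * reverse p₊ + reverse p₋ * p₋ = (x₊ * reverse x₊ + reverse x₋ * x₋) * (y₊ * reverse y₊ + reverse y₋ * y₋)`. -/
theorem octNorm_mul (l : Fin 3 → ℝ) (hl : ∀ i, l i = 1 ∨ l i = -1)
    (xp xm yp ym : CliffordAlgebra (Qf l))
    (hxp : xp ∈ evenOdd (Qf l) 0) (hxm : xm ∈ evenOdd (Qf l) 1)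
    (hyp : yp ∈ evenOdd (Qf l) 0) (hym : ym ∈ evenOdd (Qf l) 1) :
    octNorm (Qf l) (xp * yp - reverse ym * xm) (ym * xp + xm * reverse yp) =
      octNorm (Qf l) xp xm * octNorm (Qf l) yp ym ∧
    (xp * yp - reverse ym * xm) * reverse (xp * yp - reverse ym * xm) +
        reverse (ym * xp + xm * reverse yp) * (ym * xp + xm * reverse yp) =
      (xp * reverse xp + reverse xm * xm) * (yp * reverse yp + reverse ym * ym) := by
  obtain ⟨sA, hA1, hA2⟩ := even_norm l xp hxp
  obtain ⟨sC, hC1, hC2⟩ := even_norm l yp hyp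
  obtain ⟨sB, hB1, hB2⟩ := odd_norm l xm hxm
  obtain ⟨sD, hD1, hD2⟩ := odd_norm l ym hym
  have hv : yp * reverse xm * ym ∈ evenOdd (Qf l) 0 := by
    have h1 : yp * reverse xm ∈ evenOdd (Qf l) (0 + 1) :=
      SetLike.mul_mem_graded hyp ((reverse_mem_evenOdd_iff _).mpr hxm)
    have h2 : yp * reverse xm * ym ∈ evenOdd (Qf l) (0 + 1 + 1) :=
      SetLike.mul_mem_graded h1 hym
    rwa [show (0 + 1 + 1 : ZMod 2) = 0 by decide] at h2
  have h := trace_id l xp (yp * reverse xm * ym) hxp hv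
  simp only [reverse.map_mul, reverse_reverse] at h
  have key : (xp * yp - reverse ym * xm) * (reverse yp * reverse xp - reverse xm * ym) +
      (reverse xp * reverse ym + yp * reverse xm) * (ym * xp + xm * reverse yp) =
      (xp * reverse xp + reverse xm * xm) * (yp * reverse yp + reverse ym * ym) :=
    assemble xp (reverse xp) xm (reverse xm) yp (reverse yp) ym (reverse ym)
      sA sB sC sD hA1 hA2 hB1 hB2 hC1 hD2 h
  have goal2 : (xp * yp - reverse ym * xm) * reverse (xp * yp - reverse ym * xm) +
      reverse (ym * xp + xm * reverse yp) * (ym * xp + xm * reverse yp) =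
      (xp * reverse xp + reverse xm * xm) * (yp * reverse yp + reverse ym * ym) := by
    simp only [map_sub, map_add, reverse.map_mul, reverse_reverse]
    exact key
  refine ⟨?_, goal2⟩
  rw [octNorm_eq, octNorm_eq, octNorm_eq, goal2]
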